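/- For every integer n ≥ 4, the characteristic polynomial of the signless Laplacian matrix of the graph B_n¹ equals (x−1)^{n−4} (x−2) (x³ − (n+4)x² + 4n·x − 8). -/

import Mathlib

open Polynomial

/-- The signless Laplacian matrix `Q(G) = D(G) + A(G)` of a simple graph, over `ℝ`. -/
noncomputable def signlessLaplacian {V : Type*} [Fintype V] [DecidableEq V]
    (G : SimpleGraph V) : Matrix V V ℝ :=
  letI := Classical.decRel G.Adj
  G.degMatrix ℝ + G.adjMatrix ℝ

/-- The signless Laplacian characteristic polynomial `Q_G(x) = det (x I - Q(G))`. -/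
noncomputable def Qpoly {V : Type*} [Fintype V] [DecidableEq V] (G : SimpleGraph V) :
    Polynomial ℝ :=
  (signlessLaplacian G).charpoly

/-- The signless Laplacian coefficients: `φ_i(G)` is `(-1)^i` times the coefficient of
`x^(n-i)` in the signless Laplacian characteristic polynomial. -/
noncomputable def phi {V : Type*} [Fintype V] [DecidableEq V] (G : SimpleGraph V) (i : ℕ) : ℝ :=
  (-1 : ℝ) ^ i * (Qpoly G).coeff (Fintype.card V - i)
/-- Attach `p i` pendant vertices at each vertex `i` of a base graph `H` on `Fin k`. -/
def addPendants {k : ℕ} (H : SimpleGraph (Fin k)) (p : Fin k → ℕ) :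
    SimpleGraph ((Fin k) ⊕ (Σ i : Fin k, Fin (p i))) where
  Adj x y :=
    match x, y with
    | Sum.inl a, Sum.inl b => H.Adj a b
    | Sum.inl a, Sum.inr b => a = b.1
    | Sum.inr a, Sum.inl b => a.1 = b
    | Sum.inr _, Sum.inr _ => False
  symm := ⟨by
    rintro (a | a) (b | b) h
    · exact H.adj_symm h
    · exact h.symm
    · exact h.symm
    · exact h⟩
  loopless := ⟨by
    rintro (a | a) h
    · exact H.irrefl h
    · exact h⟩
/-- The base of `B₃`: vertices `u,v,w,z = 0,1,2,3` with edges `uv, uw, vw, uz, vz`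
(the 4-cycle `u w v z` plus the chord `uv`). -/
def B3base : SimpleGraph (Fin 4) :=
  SimpleGraph.fromRel (fun a b =>
    (a = 0 ∧ b = 1) ∨ (a = 0 ∧ b = 2) ∨ (a = 1 ∧ b = 2) ∨
    (a = 0 ∧ b = 3) ∨ (a = 1 ∧ b = 3))

/-- `B₃(a,b,c,d)`: the base `B₃` with `a,b,c,d` pendant vertices attached at
`u,v,w,z` respectively. -/
def B3 (a b c d : ℕ) := addPendants B3base ![a, b, c, d]

section Aux
open Matrix

@[simp] lemma adj_ll {k} (H : SimpleGraph (Fin k)) (p : Fin k → ℕ) (a b : Fin k) :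
    (addPendants H p).Adj (Sum.inl a) (Sum.inl b) ↔ H.Adj a b := Iff.rfl
@[simp] lemma adj_lr {k} (H : SimpleGraph (Fin k)) (p : Fin k → ℕ) (a : Fin k) (b : Σ i, Fin (p i)) :
    (addPendants H p).Adj (Sum.inl a) (Sum.inr b) ↔ a = b.1 := Iff.rfl
@[simp] lemma adj_rl {k} (H : SimpleGraph (Fin k)) (p : Fin k → ℕ) (a : Σ i, Fin (p i)) (b : Fin k) :
    (addPendants H p).Adj (Sum.inr a) (Sum.inl b) ↔ a.1 = b := Iff.rfl
@[simp] lemma adj_rr {k} (H : SimpleGraph (Fin k)) (p : Fin k → ℕ) (a b : Σ i, Fin (p i)) :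
    (addPendants H p).Adj (Sum.inr a) (Sum.inr b) ↔ False := Iff.rfl

lemma deg_eq {V : Type*} [Fintype V] [DecidableEq V] (G : SimpleGraph V)
    [DecidableRel G.Adj] (v : V) :
    G.degree v = ∑ w, if G.Adj v w then 1 else 0 := by
  rw [SimpleGraph.degree, SimpleGraph.neighborFinset_eq_filter, Finset.card_filter]

lemma deg_inl (m : ℕ) [DecidableRel (B3 m 0 0 0).Adj] (a : Fin 4) :
    (B3 m 0 0 0).degree (Sum.inl a) = ![3 + m, 3, 2, 2] a := by
  rw [deg_eq, Fintype.sum_sum_type, Fin.sum_univ_four]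
  rw [← Finset.univ_sigma_univ, Finset.sum_sigma]
  simp only [B3, adj_ll, adj_lr]
  fin_cases a <;>
    norm_num [B3base, SimpleGraph.fromRel_adj, Fin.sum_univ_four] <;> decide

lemma deg_inr (m : ℕ) [DecidableRel (addPendants B3base ![m,0,0,0]).Adj]
    (s : Σ i : Fin 4, Fin (![m,0,0,0] i)) :
    (addPendants B3base ![m,0,0,0]).degree (Sum.inr s) = 1 := by
  rw [deg_eq, Fintype.sum_sum_type]
  rw [← Finset.univ_sigma_univ, Finset.sum_sigma]
  simp only [adj_rl, adj_rr]
  simp [Finset.sum_ite_eq]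


def sigEquiv (m : ℕ) : (Σ i : Fin 4, Fin (![m,0,0,0] i)) ≃ Fin m where
  toFun x := match x with
    | ⟨0, j⟩ => j
    | ⟨1, j⟩ => j.elim0
    | ⟨2, j⟩ => j.elim0
    | ⟨3, j⟩ => j.elim0
  invFun j := ⟨0, j⟩
  left_inv := by rintro ⟨i, j⟩; fin_cases i <;> first | rfl | exact absurd j.isLt (by simp)
  right_inv j := rfl

def Bmat (m : ℕ) : Matrix (Fin 4) (Fin m) ℝ := Matrix.of fun i _ => if i = 0 then 1 else 0

def Q4 (m : ℕ) : Matrix (Fin 4) (Fin 4) ℝ :=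
  !![3+m,1,1,1; 1,3,1,1; 1,1,2,0; 1,1,0,2]

lemma block (m : ℕ) :
    reindex ((Equiv.refl (Fin 4)).sumCongr (sigEquiv m))
        ((Equiv.refl (Fin 4)).sumCongr (sigEquiv m)) (signlessLaplacian (B3 m 0 0 0)) =
      fromBlocks (Q4 m) (Bmat m) (Bmat m)ᵀ 1 := by
  classical
  ext x y
  have hsymm : ∀ j : Fin m, ((Equiv.refl (Fin 4)).sumCongr (sigEquiv m)).symm (Sum.inr j)
      = Sum.inr ⟨0, j⟩ := fun j => rfl
  rcases x with i | i <;> rcases y with j | j <;>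
    simp only [reindex_apply, submatrix_apply, Equiv.sumCongr_symm, Equiv.sumCongr_apply,
      Equiv.symm_symm, Sum.map_inl, Sum.map_inr, Equiv.refl_symm, Equiv.refl_apply, hsymm,
      signlessLaplacian, SimpleGraph.degMatrix, Matrix.add_apply, Matrix.diagonal_apply,
      SimpleGraph.adjMatrix_apply, fromBlocks_apply₁₁, fromBlocks_apply₁₂,
      fromBlocks_apply₂₁, fromBlocks_apply₂₂]
  · rw [deg_inl]
    fin_cases i <;> fin_cases j <;>
      simp [Q4, B3, B3base, SimpleGraph.fromRel_adj]
  · simp [B3, Bmat, show ∀ j : Fin m, (sigEquiv m).symm j = ⟨0, j⟩ from fun _ => rfl]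
  · simp [B3, Bmat, eq_comm, show ∀ j : Fin m, (sigEquiv m).symm j = ⟨0, j⟩ from fun _ => rfl]
  · simp [B3, deg_inr, Matrix.one_apply,
      show ∀ j : Fin m, (sigEquiv m).symm j = ⟨0, j⟩ from fun _ => rfl]
    by_cases h : i = j
    · subst h
      simp only [if_pos rfl, ↓reduceIte]
      norm_cast
      have := deg_inr m ((sigEquiv m).symm i)
      simp only [SimpleGraph.degree, SimpleGraph.neighborFinset, Set.toFinset_card] at this ⊢
      exact (Set.toFinset_card _).trans ((Fintype.card_congr' rfl).trans this)
    · rw [if_neg h, if_neg]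
      intro h'
      exact h (eq_of_heq (Sigma.mk.inj_iff.mp h').2)

lemma eval_charpoly {ι : Type*} [Fintype ι] [DecidableEq ι] (M : Matrix ι ι ℝ) (x : ℝ) :
    (M.charpoly).eval x = (x • (1 : Matrix ι ι ℝ) - M).det := by
  rw [Matrix.charpoly, ← coe_evalRingHom, RingHom.map_det]
  congr 1
  ext i j
  by_cases h : i = j
  · subst h; simp [charmatrix_apply_eq, Matrix.one_apply]
  · simp [charmatrix_apply_ne _ _ _ h, Matrix.one_apply_ne h]

lemma det_fin_four (A : Matrix (Fin 4) (Fin 4) ℝ) :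
    A.det = A 0 0*A 1 1*A 2 2*A 3 3 - A 0 0*A 1 1*A 2 3*A 3 2 - A 0 0*A 1 2*A 2 1*A 3 3 + A 0 0*A 1 2*A 2 3*A 3 1 + A 0 0*A 1 3*A 2 1*A 3 2 - A 0 0*A 1 3*A 2 2*A 3 1 - A 0 1*A 1 0*A 2 2*A 3 3 + A 0 1*A 1 0*A 2 3*A 3 2 + A 0 1*A 1 2*A 2 0*A 3 3 - A 0 1*A 1 2*A 2 3*A 3 0 - A 0 1*A 1 3*A 2 0*A 3 2 + A 0 1*A 1 3*A 2 2*A 3 0 + A 0 2*A 1 0*A 2 1*A 3 3 - A 0 2*A 1 0*A 2 3*A 3 1 - A 0 2*A 1 1*A 2 0*A 3 3 + A 0 2*A 1 1*A 2 3*A 3 0 + A 0 2*A 1 3*A 2 0*A 3 1 - A 0 2*A 1 3*A 2 1*A 3 0 - A 0 3*A 1 0*A 2 1*A 3 2 + A 0 3*A 1 0*A 2 2*A 3 1 + A 0 3*A 1 1*A 2 0*A 3 2 - A 0 3*A 1 1*A 2 2*A 3 0 - A 0 3*A 1 2*A 2 0*A 3 1 + A 0 3*A 1 2*A 2 1*A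 3 0 := by
  rw [Matrix.det_succ_row_zero]
  simp only [Fin.sum_univ_succ, Fin.sum_univ_zero, Matrix.det_fin_three]
  simp [Matrix.submatrix_apply, Fin.succAbove, Fin.lt_def]
  ring

set_option maxHeartbeats 1000000 in
lemma key (m : ℕ) :
    Qpoly (B3 m 0 0 0) =
      (X - 1) ^ m * (X - 2) *
        (X ^ 3 - ((m : ℝ[X]) + 8) * X ^ 2 + (4 * (m : ℝ[X]) + 16) * X - 8) := by
  have h1 : Qpoly (B3 m 0 0 0) =
      (fromBlocks (Q4 m) (Bmat m) (Bmat m)ᵀ (1 : Matrix (Fin m) (Fin m) ℝ)).charpoly := by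
    rw [Qpoly, ← block m, Matrix.charpoly_reindex]
  rw [h1]
  set T : ℝ[X] := (X - 1) ^ m * (X - 2) *
    (X ^ 3 - ((m : ℝ[X]) + 8) * X ^ 2 + (4 * (m : ℝ[X]) + 16) * X - 8) with hT
  have main : ∀ x : ℝ, x ≠ 1 →
      ((fromBlocks (Q4 m) (Bmat m) (Bmat m)ᵀ (1 : Matrix (Fin m) (Fin m) ℝ)).charpoly).eval x
        = T.eval x := by
    intro x hx1
    have hx : x - 1 ≠ 0 := sub_ne_zero.mpr hx1
    rw [_root_.eval_charpoly]
    have hsplit : x • (1 : Matrix (Fin 4 ⊕ Fin m) (Fin 4 ⊕ Fin m) ℝ) -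
        fromBlocks (Q4 m) (Bmat m) (Bmat m)ᵀ 1 =
        fromBlocks (x • 1 - Q4 m) (-(Bmat m)) (-(Bmat m)ᵀ) ((x - 1) • 1) := by
      ext a b
      rcases a with i | i <;> rcases b with j | j <;>
        simp [Matrix.one_apply, fromBlocks_apply₁₁, fromBlocks_apply₁₂, fromBlocks_apply₂₁,
          fromBlocks_apply₂₂] <;> split <;> ring
    rw [hsplit]
    haveI : Invertible ((x - 1) • (1 : Matrix (Fin m) (Fin m) ℝ)) :=
      ⟨(x - 1)⁻¹ • 1, by
        rw [Matrix.smul_mul, Matrix.mul_smul, smul_smul, inv_mul_cancel₀ hx, one_smul,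
          Matrix.one_mul], by
        rw [Matrix.smul_mul, Matrix.mul_smul, smul_smul, mul_inv_cancel₀ hx, one_smul,
          Matrix.one_mul]⟩
    rw [det_fromBlocks₂₂]
    have hinv : ⅟((x - 1) • (1 : Matrix (Fin m) (Fin m) ℝ)) = (x - 1)⁻¹ • 1 :=
      invOf_eq_right_inv (by
        rw [Matrix.smul_mul, Matrix.mul_smul, smul_smul, mul_inv_cancel₀ hx, one_smul,
          Matrix.one_mul])
    rw [hinv]
    rw [show ((x - 1) • (1 : Matrix (Fin m) (Fin m) ℝ)).det = (x - 1) ^ m by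
      rw [Matrix.det_smul, Matrix.det_one, Fintype.card_fin, mul_one]]
    have hA : x • (1 : Matrix (Fin 4) (Fin 4) ℝ) - Q4 m -
        (-(Bmat m)) * ((x - 1)⁻¹ • (1 : Matrix (Fin m) (Fin m) ℝ)) * (-(Bmat m)ᵀ) =
        !![x - (3 + m) - m * (x - 1)⁻¹, -1, -1, -1;
           -1, x - 3, -1, -1;
           -1, -1, x - 2, 0;
           -1, -1, 0, x - 2] := by
      have hBBt : (-(Bmat m)) * ((x - 1)⁻¹ • (1 : Matrix (Fin m) (Fin m) ℝ)) * (-(Bmat m)ᵀ) =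
          Matrix.of (fun i j => if i = 0 ∧ j = 0 then (m : ℝ) * (x - 1)⁻¹ else 0) := by
        simp only [Matrix.neg_mul, Matrix.mul_neg, neg_neg, Matrix.mul_smul, Matrix.mul_one,
          Matrix.smul_mul]
        ext i j
        by_cases hi : i = 0 <;> by_cases hj : j = 0 <;>
          simp [Bmat, Matrix.mul_apply, hi, hj, mul_comm]
      rw [hBBt]
      ext i j
      fin_cases i <;> fin_cases j <;>
        norm_num [Q4, Matrix.one_apply]
    rw [hA, det_fin_four]
    rw [hT]
    simp only [eval_mul, eval_pow, eval_sub, eval_add, eval_one, eval_X, eval_ofNat,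
      eval_natCast, Matrix.cons_val', Matrix.cons_val_zero, Matrix.cons_val_one,
      Matrix.head_cons, Matrix.empty_val', Matrix.cons_val_fin_one, Matrix.head_fin_const,
      Matrix.of_apply, Matrix.cons_val_two, Matrix.cons_val_three, Matrix.tail_cons]
    field_simp
    ring
  have hzero : ((fromBlocks (Q4 m) (Bmat m) (Bmat m)ᵀ (1 : Matrix (Fin m) (Fin m) ℝ)).charpoly
      - T) = 0 := by
    apply Polynomial.eq_zero_of_infinite_isRoot
    apply Set.Infinite.mono (s := ({1} : Set ℝ)ᶜ)
    · intro x hx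
      have := main x hx
      simp [Polynomial.IsRoot, this]
    · exact (Set.finite_singleton 1).infinite_compl
  exact sub_eq_zero.mp hzero

end Aux

/-- the signless Laplacian characteristic polynomial of
`B_n¹ = B₃(n−4,0,0,0)`. -/
theorem Qpoly_Bn1 (n : ℕ) (hn : 4 ≤ n) :
    Qpoly (B3 (n - 4) 0 0 0) =
      (X - 1) ^ (n - 4) * (X - 2) *
        (X ^ 3 - ((n : ℝ[X]) + 4) * X ^ 2 + 4 * (n : ℝ[X]) * X - 8) := by
  obtain ⟨m, rfl⟩ : ∃ m, n = m + 4 := ⟨n - 4, (Nat.sub_add_cancel hn).symm⟩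
  rw [show m + 4 - 4 = m by omega]
  rw [key m]
  push_cast
  ring
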